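/- Let ψ, φ, ψ^H, φ^H : ℝ → ℝ be integrable functions whose Fourier transforms (ψ̂(ω) = ∫_ℝ ψ(t) e^{-iωt} dt, etc.) satisfy ψ̂^H(ω) = −i·sign(ω)·ψ̂(ω) and φ̂^H(ω) = −i·sign(ω)·φ̂(ω) for every ω ≠ 0. Define Ψ^ā : ℝ² → ℝ by Ψ^ā(x, y) = (1/2)(ψ(x)φ(y) + ψ^H(x)φ^H(y)), and let Ψ̂^ā(ω_x, ω_y) = ∫_{ℝ²} Ψ^ā(x, y) e^{-i(ω_x x + ω_y y)} dx dy be its two-dimensional Fourier transform. Then for all (ω_x, ω_y) with ω_x ≠ 0 and ω_y ≠ 0: Ψ̂^ā(ω_x, ω_y) = ψ̂(ω_x)·φ̂(ω_y) if sign(ω_x) ≠ sign(ω_y), and Ψ̂^ā(ω_x, ω_y) = 0 if sign(ω_x) = sign(ω_y). -/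

import Mathlib

open Real MeasureTheory


lemma integ_mul_exp {f : ℝ → ℝ} (hf : Integrable f) (ω : ℝ) :
    Integrable (fun t : ℝ => (f t : ℂ) * Complex.exp (-((ω * t : ℝ) : ℂ) * Complex.I)) := by
  have h : Integrable (fun t : ℝ =>
      Complex.exp (-((ω * t : ℝ) : ℂ) * Complex.I) * (f t : ℂ)) := by
    apply hf.ofReal.bdd_mul (c := 1)
    · exact (Complex.continuous_exp.comp (by continuity)).aestronglyMeasurable
    · refine Filter.Eventually.of_forall (fun t => ?_)
      have : (-((ω * t : ℝ) : ℂ) * Complex.I) = ((-(ω * t) : ℝ) : ℂ) * Complex.I := by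
        push_cast; ring
      rw [this]
      simp [Complex.norm_exp]
  simpa [mul_comm] using h

/-- Equation (44) of the paper: the real part of the tensor product of an
analytic wavelet and an anti-analytic wavelet selects frequencies in the
second/fourth quadrants of the 2D frequency plane. -/
theorem stmt_12 (ψ φ ψH φH : ℝ → ℝ)
    (hψ : Integrable ψ) (hφ : Integrable φ)
    (hψH : Integrable ψH) (hφH : Integrable φH)
    (hHψ : ∀ ω : ℝ, ω ≠ 0 →
      (∫ t : ℝ, (ψH t : ℂ) * Complex.exp (-((ω * t : ℝ) : ℂ) * Complex.I))
        = -Complex.I * (Real.sign ω : ℂ) *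
            ∫ t : ℝ, (ψ t : ℂ) * Complex.exp (-((ω * t : ℝ) : ℂ) * Complex.I))
    (hHφ : ∀ ω : ℝ, ω ≠ 0 →
      (∫ t : ℝ, (φH t : ℂ) * Complex.exp (-((ω * t : ℝ) : ℂ) * Complex.I))
        = -Complex.I * (Real.sign ω : ℂ) *
            ∫ t : ℝ, (φ t : ℂ) * Complex.exp (-((ω * t : ℝ) : ℂ) * Complex.I)) :
    ∀ ωx ωy : ℝ, ωx ≠ 0 → ωy ≠ 0 →
      (∫ p : ℝ × ℝ,
          ((1 / 2 * (ψ p.1 * φ p.2 + ψH p.1 * φH p.2) : ℝ) : ℂ) *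
            Complex.exp (-((ωx * p.1 + ωy * p.2 : ℝ) : ℂ) * Complex.I))
        = if Real.sign ωx ≠ Real.sign ωy
          then (∫ t : ℝ, (ψ t : ℂ) * Complex.exp (-((ωx * t : ℝ) : ℂ) * Complex.I)) *
               (∫ t : ℝ, (φ t : ℂ) * Complex.exp (-((ωy * t : ℝ) : ℂ) * Complex.I))
          else 0 := by
  intro ωx ωy hx hy
  have hE : ∀ p : ℝ × ℝ,
      ((1 / 2 * (ψ p.1 * φ p.2 + ψH p.1 * φH p.2) : ℝ) : ℂ) *
        Complex.exp (-((ωx * p.1 + ωy * p.2 : ℝ) : ℂ) * Complex.I)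
      = (1/2 : ℂ) * ((((ψ p.1 : ℂ) * Complex.exp (-((ωx * p.1 : ℝ):ℂ) * Complex.I)) *
          ((φ p.2 : ℂ) * Complex.exp (-((ωy * p.2 : ℝ):ℂ) * Complex.I))) +
         (((ψH p.1 : ℂ) * Complex.exp (-((ωx * p.1 : ℝ):ℂ) * Complex.I)) *
          ((φH p.2 : ℂ) * Complex.exp (-((ωy * p.2 : ℝ):ℂ) * Complex.I)))) := by
    intro p
    rw [show (-((ωx * p.1 + ωy * p.2 : ℝ) : ℂ) * Complex.I)
        = (-((ωx * p.1 : ℝ):ℂ) * Complex.I) + (-((ωy * p.2 : ℝ):ℂ) * Complex.I) by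
          push_cast; ring,
      Complex.exp_add]
    push_cast; ring
  simp only [hE]
  rw [MeasureTheory.integral_const_mul]
  rw [show (volume : Measure (ℝ × ℝ)) = (volume : Measure ℝ).prod volume from
    Measure.volume_eq_prod ℝ ℝ]
  rw [MeasureTheory.integral_add
      ((integ_mul_exp hψ ωx).mul_prod (integ_mul_exp hφ ωy))
      ((integ_mul_exp hψH ωx).mul_prod (integ_mul_exp hφH ωy)),
    MeasureTheory.integral_prod_mul
      (fun x : ℝ => (ψ x : ℂ) * Complex.exp (-((ωx * x : ℝ):ℂ) * Complex.I))
      (fun y : ℝ => (φ y : ℂ) * Complex.exp (-((ωy * y : ℝ):ℂ) * Complex.I)),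
    MeasureTheory.integral_prod_mul
      (fun x : ℝ => (ψH x : ℂ) * Complex.exp (-((ωx * x : ℝ):ℂ) * Complex.I))
      (fun y : ℝ => (φH y : ℂ) * Complex.exp (-((ωy * y : ℝ):ℂ) * Complex.I)),
    hHψ ωx hx, hHφ ωy hy]
  have hsx : Real.sign ωx = 1 ∨ Real.sign ωx = -1 := by
    rcases hx.lt_or_gt with h | h
    · exact Or.inr (Real.sign_of_neg h)
    · exact Or.inl (Real.sign_of_pos h)
  have hsy : Real.sign ωy = 1 ∨ Real.sign ωy = -1 := by
    rcases hy.lt_or_gt with h | h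
    · exact Or.inr (Real.sign_of_neg h)
    · exact Or.inl (Real.sign_of_pos h)
  rcases hsx with h1 | h1 <;> rcases hsy with h2 | h2 <;>
    rw [h1, h2] <;> norm_num <;>
    · ring_nf
      rw [Complex.I_sq]
      ring
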